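/- arXiv:2404.00746 — 2 statements merged into one kernel-verified Lean document; each statement's English description precedes it below -/
import Mathlib

section
/- Let DB be an uncertain database all of whose existential probabilities lie in [0,1], and let α and α' be patterns such that α is a sublist (subsequence) of α'. Then expSup(α') ≤ expSup(α). That is, expected support is anti-monotone with respect to the subsequence relation on patterns. -/
variable {I : Type*}

/-- An uncertain sequence: a finite list of (item, existential probability) pairs. -/
abbrev USeq (I : Type*) := List (I × ℝ)

/-- An uncertain database: a finite list of uncertain sequences. -/
abbrev UDB (I : Type*) := List (USeq I)

/-- `α` occurs in `S`: some sublist of `S` has item list `α`. -/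
def Occurs (α : List I) (S : USeq I) : Prop :=
  ∃ o : USeq I, o.Sublist S ∧ o.map Prod.fst = α

/-- Maximum occurrence probability of pattern `α` in `S`
(`0` if `α` has no occurrence in `S`; `1` for the empty pattern). -/
noncomputable def maxPrS [DecidableEq I] (α : List I) (S : USeq I) : ℝ :=
  WithBot.unbotD 0 (((S.sublists.filter fun o => decide (o.map Prod.fst = α)).map
      fun o => (o.map Prod.snd).prod).maximum)

/-- Greedy projection: `projSeq α S = some S'` iff `α` occurs in `S`, in which case `S'`
is the suffix of `S` strictly after the last matched position of the greedy (leftmost)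
occurrence of `α` in `S`.  For the empty pattern it is `S` itself. -/
def projSeq [DecidableEq I] : List I → USeq I → Option (USeq I)
  | [], S => some S
  | _ :: _, [] => none
  | i :: α, (x, _) :: rest =>
      if x = i then projSeq α rest else projSeq (i :: α) rest

/-- The projected database `DB|α`. -/
def projDB [DecidableEq I] (α : List I) (DB : UDB I) : UDB I :=
  DB.filterMap (projSeq α)

/-- `P̂_D(i)`: maximum probability of an entry with item `i` over all sequences of `D`
(`0` if `i` occurs in no sequence of `D`). -/
noncomputable def Phat [DecidableEq I] (D : UDB I) (i : I) : ℝ :=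
  WithBot.unbotD 0 (((D.flatten.filter fun e => decide (e.1 = i)).map Prod.snd).maximum)

/-- `maxPr(α)` relative to `DB`: the product of per-step maximum probabilities over the
successively projected databases. -/
noncomputable def maxPrDB [DecidableEq I] (DB : UDB I) (α : List I) : ℝ :=
  ∏ k : Fin α.length, Phat (projDB (α.take k.val) DB) (α.get k)

/-- Expected support of `α` in `DB`. -/
noncomputable def expSup [DecidableEq I] (DB : UDB I) (α : List I) : ℝ :=
  (DB.map fun S => maxPrS α S).sum

/-- `expSup^cap` of a nonempty pattern (junk value `0` on the empty pattern). -/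
noncomputable def expSupCap [DecidableEq I] (DB : UDB I) (α : List I) : ℝ :=
  match α.getLast? with
  | none => 0
  | some i =>
      maxPrDB DB α.dropLast *
        ((projDB α.dropLast DB).map fun S' => maxPrS [i] S').sum

/-- Number of sequences of `D` in which item `i` occurs. -/
def supCount [DecidableEq I] (D : UDB I) (i : I) : ℕ :=
  (D.filter fun S => decide (i ∈ S.map Prod.fst)).length

/-- `expSupport^top` of a nonempty pattern (junk value `0` on the empty pattern). -/
noncomputable def expSupTop [DecidableEq I] (DB : UDB I) (α : List I) : ℝ :=
  match α.getLast? with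
  | none => 0
  | some i =>
      maxPrDB DB α.dropLast * Phat (projDB α.dropLast DB) i *
        (supCount (projDB α.dropLast DB) i : ℝ)

/-- Item `i` occurs in some sequence of `D`. -/
def ItemOccursIn (D : UDB I) (i : I) : Prop :=
  ∃ S ∈ D, i ∈ S.map Prod.fst

/-- `sWeight`: average weight of the items of a pattern. -/
noncomputable def sWeight (w : I → ℝ) (α : List I) : ℝ :=
  (α.map w).sum / (α.length : ℝ)

/-- Maximum weight among the items of a pattern (`0` for the empty pattern). -/
noncomputable def mxWs (w : I → ℝ) (α : List I) : ℝ :=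
  WithBot.unbotD 0 ((α.map w).maximum)

/-- Maximum weight among items occurring in some sequence of `D` (`0` if none). -/
noncomputable def mxWDB (w : I → ℝ) (D : UDB I) : ℝ :=
  WithBot.unbotD 0 ((D.flatten.map fun e => w e.1).maximum)

/-- `wgt^cap`. -/
noncomputable def wgtCap [DecidableEq I] (DB : UDB I) (w : I → ℝ) (α : List I) : ℝ :=
  max (mxWDB w (projDB α.dropLast DB)) (mxWs w α)

/-- Weighted expected support. -/
noncomputable def WES [DecidableEq I] (DB : UDB I) (w : I → ℝ) (α : List I) : ℝ :=
  expSup DB α * sWeight w α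

/-- `wExpSup^cap`. -/
noncomputable def wExpSupCap [DecidableEq I] (DB : UDB I) (w : I → ℝ) (α : List I) : ℝ :=
  expSupCap DB α * wgtCap DB w α
lemma sublist_prod_ge {l l' : List ℝ} (h : l'.Sublist l)
    (h0 : ∀ x ∈ l, 0 ≤ x) (h1 : ∀ x ∈ l, x ≤ 1) : l.prod ≤ l'.prod := by
  induction h with
  | slnil => exact le_refl _
  | cons a hs ih =>
      rename_i l₁ l₂
      simp only [List.prod_cons]
      calc a * l₂.prod ≤ 1 * l₂.prod := by
            apply mul_le_mul_of_nonneg_right (h1 a (by simp))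
            exact List.prod_nonneg fun x hx => h0 x (by simp [hx])
        _ = l₂.prod := one_mul _
        _ ≤ l₁.prod := ih (fun x hx => h0 x (by simp [hx])) (fun x hx => h1 x (by simp [hx]))
  | cons_cons a hs ih =>
      rename_i l₁ l₂
      simp only [List.prod_cons]
      exact mul_le_mul_of_nonneg_left
        (ih (fun x hx => h0 x (by simp [hx])) (fun x hx => h1 x (by simp [hx])))
        (h0 a (by simp))

lemma maxPrS_nonneg {I : Type*} [DecidableEq I] (α : List I) (S : USeq I)
    (h0 : ∀ e ∈ S, 0 ≤ e.2) : 0 ≤ maxPrS α S := by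
  unfold maxPrS
  rcases hm : (((S.sublists.filter fun o => decide (o.map Prod.fst = α)).map
      fun o => (o.map Prod.snd).prod).maximum) with _ | m
  · rw [hm]; exact le_rfl
  · rw [hm]
    show (0:ℝ) ≤ m
    have hmem := List.maximum_mem hm
    simp only [List.mem_map, List.mem_filter, List.mem_sublists, decide_eq_true_eq] at hmem
    obtain ⟨o, ⟨ho, -⟩, rfl⟩ := hmem
    exact List.prod_nonneg fun x hx => by
      obtain ⟨e, he, rfl⟩ := List.mem_map.1 hx
      exact h0 e (ho.subset he)

lemma maxPrS_anti {I : Type*} [DecidableEq I] {α α' : List I} (h : α.Sublist α') (S : USeq I)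
    (hp : ∀ e ∈ S, e.2 ∈ Set.Icc (0:ℝ) 1) : maxPrS α' S ≤ maxPrS α S := by
  have h0 : ∀ e ∈ S, 0 ≤ e.2 := fun e he => (hp e he).1
  conv_lhs => rw [maxPrS]
  rcases hm : (((S.sublists.filter fun o => decide (o.map Prod.fst = α')).map
      fun o => (o.map Prod.snd).prod).maximum) with _ | m
  · rw [hm]; exact maxPrS_nonneg α S h0
  · rw [hm]
    show (m:ℝ) ≤ maxPrS α S
    have hmem := List.maximum_mem hm
    simp only [List.mem_map, List.mem_filter, List.mem_sublists, decide_eq_true_eq] at hmem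
    obtain ⟨o', ⟨ho'S, ho'α⟩, rfl⟩ := hmem
    -- find o sublist of o' with o.map fst = α
    have : α.Sublist (o'.map Prod.fst) := ho'α ▸ h
    obtain ⟨o, hoo', hoα⟩ := List.sublist_map_iff.1 this
    have hoS : o.Sublist S := hoo'.trans ho'S
    -- o contributes to maxPrS α S
    have hoMem : (o.map Prod.snd).prod ∈
        ((S.sublists.filter fun o => decide (o.map Prod.fst = α)).map
          fun o => (o.map Prod.snd).prod) := by
      exact List.mem_map.2 ⟨o, List.mem_filter.2 ⟨List.mem_sublists.2 hoS, by simp [hoα.symm]⟩, rfl⟩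
    have hle : (o'.map Prod.snd).prod ≤ (o.map Prod.snd).prod := by
      apply sublist_prod_ge (hoo'.map Prod.snd)
      · intro x hx; obtain ⟨e, he, rfl⟩ := List.mem_map.1 hx; exact (hp e (ho'S.subset he)).1
      · intro x hx; obtain ⟨e, he, rfl⟩ := List.mem_map.1 hx; exact (hp e (ho'S.subset he)).2
    refine hle.trans ?_
    unfold maxPrS
    rcases hM : (((S.sublists.filter fun o => decide (o.map Prod.fst = α)).map
        fun o => (o.map Prod.snd).prod).maximum) with _ | M
    · exact absurd hoMem (by simp [List.maximum_eq_bot.1 hM])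
    · rw [hM]
      show (List.map Prod.snd o).prod ≤ M
      exact List.le_maximum_of_mem hoMem hM

/-- If all probabilities of `DB` lie in `[0,1]` and `α` is a sublist (subsequence) of
`α'`, then `expSup(α') ≤ expSup(α)`: expected support is anti-monotone w.r.t. the
subsequence relation on patterns. -/
theorem expSup_anti_of_sublist [DecidableEq I]
    (DB : UDB I) (hp : ∀ S ∈ DB, ∀ e ∈ S, e.2 ∈ Set.Icc (0 : ℝ) 1)
    (α α' : List I) (h : α.Sublist α') :
    expSup DB α' ≤ expSup DB α :=
  List.sum_le_sum fun S hS => maxPrS_anti h S (hp S hS)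
end

section
/- Let DB be an uncertain database, with each item x carrying a weight w(x) ∈ [0,1]. Let α be a nonempty pattern and α' = α ++ β with β nonempty, where every item of β occurs in some sequence of the projected database DB|α. Then wgt^cap(α') ≤ wgt^cap(α); that is, the weight cap is anti-monotone along prefix extensions by items of the projected database. -/
variable {I : Type*}

lemma le_maxUnbot {l : List ℝ} {a : ℝ} (h : a ∈ l) : a ≤ WithBot.unbotD 0 l.maximum := by
  have h1 := List.le_maximum_of_mem' h
  cases hm : l.maximum with
  | bot => rw [hm] at h1; exact absurd h1 (by simp)
  | coe b => rw [hm] at h1; simpa using h1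

lemma maxUnbot_le {l : List ℝ} {c : ℝ} (hc : 0 ≤ c) (h : ∀ a ∈ l, a ≤ c) :
    WithBot.unbotD 0 l.maximum ≤ c := by
  cases hm : l.maximum with
  | bot => simpa using hc
  | coe b =>
    have hb : b ∈ l := List.maximum_mem hm
    simpa using h b hb

lemma projSeq_suffix [DecidableEq I] :
    ∀ (γ : List I) (S S' : USeq I), projSeq γ S = some S' → S' <:+ S
  | [], S, S', h => by simp [projSeq] at h; simp [h]
  | i :: γ, [], S', h => by simp [projSeq] at h
  | i :: γ, (x, p) :: rest, S', h => by
    rw [projSeq] at h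
    by_cases hx : x = i
    · rw [if_pos hx] at h
      exact (projSeq_suffix γ rest S' h).trans (List.suffix_cons _ _)
    · rw [if_neg hx] at h
      exact (projSeq_suffix (i :: γ) rest S' h).trans (List.suffix_cons _ _)

lemma projSeq_append [DecidableEq I] :
    ∀ (γ δ : List I) (S : USeq I),
      projSeq (γ ++ δ) S = (projSeq γ S).bind (projSeq δ)
  | [], δ, S => by simp [projSeq]
  | i :: γ, δ, [] => by simp [projSeq]
  | i :: γ, δ, (x, p) :: rest => by
    rw [List.cons_append, projSeq, projSeq]
    by_cases hx : x = i
    · rw [if_pos hx, if_pos hx, projSeq_append γ δ rest]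
    · rw [if_neg hx, if_neg hx, ← List.cons_append, projSeq_append (i :: γ) δ rest]

lemma mem_flatten_projDB [DecidableEq I] (DB : UDB I) (γ δ : List I) {e : I × ℝ}
    (he : e ∈ (projDB (γ ++ δ) DB).flatten) : e ∈ (projDB γ DB).flatten := by
  rw [List.mem_flatten] at he ⊢
  obtain ⟨S', hS', heS'⟩ := he
  rw [projDB, List.mem_filterMap] at hS'
  obtain ⟨S, hS, hproj⟩ := hS'
  rw [projSeq_append] at hproj
  cases hT : projSeq γ S with
  | none => rw [hT] at hproj; exact absurd hproj (by simp)
  | some T =>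
    rw [hT] at hproj
    rw [Option.bind_some] at hproj
    exact ⟨T, List.mem_filterMap.2 ⟨S, hS, hT⟩,
      (projSeq_suffix δ T S' hproj).subset heS'⟩

/-- If all weights lie in `[0,1]`, `α` is nonempty, `β` is nonempty and every item of `β`
occurs in some sequence of `DB|α`, then `wgt^cap(α ++ β) ≤ wgt^cap(α)`. -/
theorem wgtCap_anti [DecidableEq I]
    (DB : UDB I) (w : I → ℝ) (hw : ∀ x : I, w x ∈ Set.Icc (0 : ℝ) 1)
    (α β : List I) (hα : α ≠ []) (hβ : β ≠ [])
    (hβocc : ∀ i ∈ β, ItemOccursIn (projDB α DB) i) :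
    wgtCap DB w (α ++ β) ≤ wgtCap DB w α := by
  set R := wgtCap DB w α with hR
  have hαsplit : α.dropLast ++ [α.getLast hα] = α := List.dropLast_append_getLast hα
  -- every entry weight in flatten of projDB α.dropLast DB is ≤ R
  have hentry : ∀ e ∈ (projDB α.dropLast DB).flatten, w e.1 ≤ R := by
    intro e he
    have : w e.1 ∈ (projDB α.dropLast DB).flatten.map fun e => w e.1 :=
      List.mem_map_of_mem he
    exact (le_maxUnbot this).trans (le_max_left _ _)
  have hR0 : 0 ≤ R := by
    obtain ⟨a, α', rfl⟩ := List.exists_cons_of_ne_nil hα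
    have : w a ∈ (a :: α').map w := by simp
    exact ((hw a).1.trans (le_maxUnbot this)).trans (le_max_right _ _)
  rw [wgtCap]
  apply max_le
  · -- mxWDB part
    apply maxUnbot_le hR0
    intro a ha
    rw [List.mem_map] at ha
    obtain ⟨e, he, rfl⟩ := ha
    have hsplit : (α ++ β).dropLast = α.dropLast ++ ([α.getLast hα] ++ β.dropLast) := by
      rw [← List.append_assoc, hαsplit, List.dropLast_append_of_ne_nil hβ]
    rw [hsplit] at he
    exact hentry e (mem_flatten_projDB DB _ _ he)
  · -- mxWs part
    apply maxUnbot_le hR0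
    intro a ha
    rw [List.mem_map] at ha
    obtain ⟨i, hi, rfl⟩ := ha
    rw [List.mem_append] at hi
    rcases hi with hi | hi
    · have : w i ∈ α.map w := List.mem_map_of_mem hi
      exact (le_maxUnbot this).trans (le_max_right _ _)
    · obtain ⟨S, hS, hiS⟩ := hβocc i hi
      rw [List.mem_map] at hiS
      obtain ⟨e, heS, he1⟩ := hiS
      have he : e ∈ (projDB α DB).flatten := List.mem_flatten.2 ⟨S, hS, heS⟩
      rw [← hαsplit] at he
      have := hentry e (mem_flatten_projDB DB _ _ he)
      rwa [he1] at this
end
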